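/- For every integer m ≥ 2, b(m) ≤ h(m) + (√2+1)·⌊log₃ m⌋. -/

import Mathlib

/-- The piecewise linear function connecting `(0,0)` and the points
`(3^n/2, (√2+1)^n/2)` for `n ≥ 1`. On `[3^n/2, 3^(n+1)/2]` it is given by the
affine formula below. -/
noncomputable def h (x : ℝ) : ℝ :=
  if x ≤ 3 / 2 then (Real.sqrt 2 + 1) / 3 * x
  else
    let n : ℕ := (⌊Real.logb 3 (2 * x)⌋).toNat
    Real.sqrt 2 / 2 * ((Real.sqrt 2 + 1) / 3) ^ n * x
      + (Real.sqrt 2 + 1) ^ n * (2 - Real.sqrt 2) / 4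

namespace NorthshieldAux

noncomputable def F (m : ℕ) : ℝ :=
  Real.sqrt 2 / 2 * ((Real.sqrt 2 + 1) / 3) ^ (Nat.log 3 m) * m
    + (Real.sqrt 2 + 1) ^ (Nat.log 3 m) * (2 - Real.sqrt 2) / 2

lemma s2 : Real.sqrt 2 * Real.sqrt 2 = 2 := Real.mul_self_sqrt (by norm_num)

lemma s2gt : (1 : ℝ) < Real.sqrt 2 := by
  nlinarith [s2, Real.sqrt_nonneg 2]

lemma s2lt : Real.sqrt 2 < 3 / 2 := by
  nlinarith [s2, Real.sqrt_nonneg 2]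

/-- On `3^k ≤ m ≤ 3^(k+1)` the value of `F m` is given by the affine formula
with exponent `k` (including the right endpoint, by continuity). -/
lemma F_formula (k m : ℕ) (h1 : 3 ^ k ≤ m) (h2 : m ≤ 3 ^ (k + 1)) :
    F m = Real.sqrt 2 / 2 * ((Real.sqrt 2 + 1) / 3) ^ k * m
      + (Real.sqrt 2 + 1) ^ k * (2 - Real.sqrt 2) / 2 := by
  rcases lt_or_eq_of_le h2 with h2' | rfl
  · rw [F, Nat.log_eq_of_pow_le_of_lt_pow h1 h2']
  · rw [F, Nat.log_pow (by norm_num)]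
    push_cast
    rw [div_pow, div_pow]
    have h3k : (3:ℝ) ^ (k+1) ≠ 0 := by positivity
    field_simp
    ring

lemma pow_div_pos (k : ℕ) : (0:ℝ) < ((Real.sqrt 2 + 1) / 3) ^ k := by
  have := s2gt; positivity

lemma pow_u_pos (k : ℕ) : (0:ℝ) < (Real.sqrt 2 + 1) ^ k := by
  have := s2gt; positivity

lemma F_pos (m : ℕ) : 0 < F m := by
  have h1 := pow_div_pos (Nat.log 3 m)
  have h2 := pow_u_pos (Nat.log 3 m)
  have := s2gt; have := s2lt
  have hm : (0:ℝ) ≤ m := Nat.cast_nonneg m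
  have : (0:ℝ) < (Real.sqrt 2 + 1) ^ (Nat.log 3 m) * (2 - Real.sqrt 2) / 2 := by
    apply div_pos (mul_pos h2 (by linarith)) (by norm_num)
  have hterm : (0:ℝ) ≤ Real.sqrt 2 / 2 * ((Real.sqrt 2 + 1) / 3) ^ (Nat.log 3 m) * m := by
    apply mul_nonneg (mul_nonneg (by positivity) h1.le) hm
  rw [F]; linarith

/-- Scaling: `F (3m) = (√2+1) F m` for `m ≥ 1`. -/
lemma F_scale (m : ℕ) (hm : 1 ≤ m) :
    F (3 * m) = (Real.sqrt 2 + 1) * F m := by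
  set k := Nat.log 3 m with hk
  have h1 : 3 ^ k ≤ m := Nat.pow_log_le_self 3 (by omega)
  have h2 : m < 3 ^ (k + 1) := Nat.lt_pow_succ_log_self (by norm_num) m
  have e1 : F m = Real.sqrt 2 / 2 * ((Real.sqrt 2 + 1) / 3) ^ k * m
      + (Real.sqrt 2 + 1) ^ k * (2 - Real.sqrt 2) / 2 :=
    F_formula k m h1 h2.le
  have e2 : F (3 * m) = Real.sqrt 2 / 2 * ((Real.sqrt 2 + 1) / 3) ^ (k+1) * (3*m : ℕ)
      + (Real.sqrt 2 + 1) ^ (k+1) * (2 - Real.sqrt 2) / 2 := by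
    apply F_formula (k+1) (3*m) (by rw [pow_succ]; omega)
    rw [pow_succ]; omega
  rw [e1, e2]
  push_cast
  rw [pow_succ, pow_succ]
  ring

/-- Step bound: `F (m+1) ≤ F m + √2/2 ((√2+1)/3)^k` whenever `3^k ≤ m`. -/
lemma F_step (k m : ℕ) (h1 : 3 ^ k ≤ m) :
    F (m + 1) ≤ F m + Real.sqrt 2 / 2 * ((Real.sqrt 2 + 1) / 3) ^ k := by
  set j := Nat.log 3 m with hj
  have hm0 : m ≠ 0 := by have : 0 < 3 ^ k := Nat.pow_pos (by norm_num); omega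
  have hj1 : 3 ^ j ≤ m := Nat.pow_log_le_self 3 hm0
  have hj2 : m < 3 ^ (j + 1) := Nat.lt_pow_succ_log_self (by norm_num) m
  have hkj : k ≤ j := by
    rw [hj]
    exact (Nat.le_log_iff_pow_le (by norm_num) hm0).mpr h1
  have e1 := F_formula j m hj1 hj2.le
  have e2 := F_formula j (m+1) (le_trans hj1 (Nat.le_succ m)) (by omega)
  have hpow : ((Real.sqrt 2 + 1) / 3) ^ j ≤ ((Real.sqrt 2 + 1) / 3) ^ k := by
    apply pow_le_pow_of_le_one (by have := s2gt; positivity) _ hkj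
    have := s2lt; rw [div_le_one (by norm_num)]; linarith
  rw [e1, e2]
  push_cast
  have hs2 : 0 ≤ Real.sqrt 2 := Real.sqrt_nonneg 2
  nlinarith [hpow, hs2]

end NorthshieldAux

set_option maxHeartbeats 3000000 in
theorem northshield_upper_bound (b : ℕ → ℝ)
    (hb0 : b 0 = 0) (hb1 : b 1 = 1)
    (hrec0 : ∀ n : ℕ, b (3 * n) = b n)
    (hrec1 : ∀ n : ℕ, b (3 * n + 1) = Real.sqrt 2 * b n + b (n + 1))
    (hrec2 : ∀ n : ℕ, b (3 * n + 2) = b n + Real.sqrt 2 * b (n + 1)) :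
    ∀ m : ℕ, 2 ≤ m →
      b m ≤ h m + (Real.sqrt 2 + 1) * (⌊Real.logb 3 (m : ℝ)⌋ : ℝ) := by
  have s2 := NorthshieldAux.s2
  have s2gt := NorthshieldAux.s2gt
  have s2lt := NorthshieldAux.s2lt
  have s2nn : (0:ℝ) ≤ Real.sqrt 2 := Real.sqrt_nonneg 2
  -- the key pair invariant
  have key : ∀ n : ℕ, 0 ≤ b n ∧ b n + b (n + 1) ≤ NorthshieldAux.F (2 * n + 1) ∧
      b n ≤ NorthshieldAux.F (2 * n + 1) / 2 := by
    intro n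
    induction n using Nat.strong_induction_on with
    | _ n IH =>
    rcases Nat.lt_or_ge n 2 with hn2 | hn2
    · interval_cases n
      · -- n = 0
        have hF1 : NorthshieldAux.F (2 * 0 + 1) = 1 := by
          have := NorthshieldAux.F_formula 0 1 (by norm_num) (by norm_num)
          norm_num at this ⊢
          rw [this]; push_cast; ring
        refine ⟨le_of_eq hb0.symm, ?_, ?_⟩
        · rw [hF1, hb0, show (0:ℕ)+1 = 1 from rfl, hb1]; norm_num
        · rw [hF1, hb0]; norm_num
      · -- n = 1
        have hb2 : b 2 = Real.sqrt 2 := by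
          have h2 := hrec2 0
          norm_num [hb0, hb1] at h2
          exact h2
        have hF3 : NorthshieldAux.F (2 * 1 + 1) = Real.sqrt 2 + 1 := by
          have := NorthshieldAux.F_formula 1 3 (by norm_num) (by norm_num)
          norm_num at this ⊢
          rw [this]; push_cast; ring
        refine ⟨by rw [hb1]; norm_num, ?_, ?_⟩
        · rw [hF3, hb1, show (1:ℕ)+1 = 2 from rfl, hb2]; linarith
        · rw [hF3, hb1]; linarith
    · obtain ⟨q, r, hr, rfl⟩ : ∃ q r, r < 3 ∧ n = 3 * q + r :=
        ⟨n / 3, n % 3, Nat.mod_lt _ (by norm_num), by omega⟩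
      have hP := NorthshieldAux.pow_div_pos
      have hU := NorthshieldAux.pow_u_pos
      interval_cases r
      · -- n = 3q, q ≥ 1
        simp only [Nat.add_zero]
        have hq1 : 1 ≤ q := by omega
        obtain ⟨hq0, hqQ, hqU⟩ := IH q (by omega)
        obtain ⟨hq10, -, -⟩ := IH (q + 1) (by omega)
        set k := Nat.log 3 (2 * q + 1) with hk
        have hk1 : 1 ≤ k := by
          rw [hk]
          exact (Nat.le_log_iff_pow_le (by norm_num) (by omega)).mpr (by omega)
        have h3k : 3 ^ k ≤ 2 * q + 1 := Nat.pow_log_le_self 3 (by omega)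
        -- scaling and step bounds
        have hscale : NorthshieldAux.F (3 * (2 * q + 1))
            = (Real.sqrt 2 + 1) * NorthshieldAux.F (2 * q + 1) :=
          NorthshieldAux.F_scale (2 * q + 1) (by omega)
        have hstep1 := NorthshieldAux.F_step k (6 * q + 1) (by omega)
        have hstep2 := NorthshieldAux.F_step k (6 * q + 2) (by omega)
        have hidx : 3 * (2 * q + 1) = 6 * q + 2 + 1 := by ring
        rw [hidx] at hscale
        have hidx2 : 6 * q + 1 + 1 = 6 * q + 2 := by ring
        rw [hidx2] at hstep1
        -- F (6q+1) ≥ (√2+1) F(2q+1) - √2 * P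
        have hP' := hP k
        have hU' := hU k
        have hUP : (Real.sqrt 2 + 1) ^ k = ((Real.sqrt 2 + 1) / 3) ^ k * 3 ^ k := by
          rw [← mul_pow]; norm_num
        have h3kR : (3:ℝ) ≤ (3:ℝ) ^ k := by
          calc (3:ℝ) = 3 ^ 1 := by norm_num
          _ ≤ 3 ^ k := by
            apply pow_le_pow_right₀ (by norm_num) hk1
        -- F (2q+1) ≥ 2 P
        have hF2P : 2 * ((Real.sqrt 2 + 1) / 3) ^ k ≤ NorthshieldAux.F (2 * q + 1) := by
          have he := NorthshieldAux.F_formula k (2 * q + 1) h3k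
            (Nat.lt_pow_succ_log_self (by norm_num) _).le
          rw [he]
          have hcast : (3:ℝ) ≤ ((2 * q + 1 : ℕ) : ℝ) := by
            have h1 : (3:ℝ) ^ k ≤ ((2 * q + 1 : ℕ) : ℝ) := by
              calc (3:ℝ) ^ k = ((3 ^ k : ℕ) : ℝ) := by push_cast; ring
              _ ≤ _ := by exact_mod_cast Nat.cast_le.mpr h3k
            linarith [h3kR]
          have hA : Real.sqrt 2 / 2 * ((Real.sqrt 2 + 1) / 3) ^ k * 3
              ≤ Real.sqrt 2 / 2 * ((Real.sqrt 2 + 1) / 3) ^ k * ((2 * q + 1 : ℕ) : ℝ) := by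
            apply mul_le_mul_of_nonneg_left hcast
            positivity
          have hB : 3 * ((Real.sqrt 2 + 1) / 3) ^ k * (2 - Real.sqrt 2) / 2
              ≤ (Real.sqrt 2 + 1) ^ k * (2 - Real.sqrt 2) / 2 := by
            rw [hUP]
            have h2 : (0:ℝ) ≤ 2 - Real.sqrt 2 := by linarith
            have := mul_le_mul_of_nonneg_left h3kR
              (mul_nonneg hP'.le h2 : (0:ℝ) ≤ ((Real.sqrt 2 + 1) / 3) ^ k * (2 - Real.sqrt 2))
            nlinarith [this]
          have hC : Real.sqrt 2 / 2 * ((Real.sqrt 2 + 1) / 3) ^ k * 3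
              + 3 * ((Real.sqrt 2 + 1) / 3) ^ k * (2 - Real.sqrt 2) / 2
              = 3 * ((Real.sqrt 2 + 1) / 3) ^ k := by ring
          linarith [hA, hB, hP']
        have hchain : (1 + Real.sqrt 2 / 2) * NorthshieldAux.F (2 * q + 1)
            ≤ NorthshieldAux.F (6 * q + 1) := by
          have h2 : 0 ≤ Real.sqrt 2 * (NorthshieldAux.F (2 * q + 1)
              - 2 * ((Real.sqrt 2 + 1) / 3) ^ k) := mul_nonneg s2nn (by linarith [hF2P])
          nlinarith [hstep1, hstep2, hscale, h2]
        have hFFle : NorthshieldAux.F (2 * q + 1) ≤ NorthshieldAux.F (6 * q + 1) := by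
          have hFp := NorthshieldAux.F_pos (2 * q + 1)
          have h2 : 0 ≤ Real.sqrt 2 * NorthshieldAux.F (2 * q + 1) := mul_nonneg s2nn hFp.le
          nlinarith [hchain, h2]
        have e0 := hrec0 q
        have e1 := hrec1 q
        have eidx : 2 * (3 * q) + 1 = 6 * q + 1 := by ring
        refine ⟨by rw [e0]; exact hq0, ?_, ?_⟩
        · rw [show 3 * q + 1 = 3 * q + 1 from rfl, e0, e1, eidx]
          have h2 : 0 ≤ Real.sqrt 2 * (NorthshieldAux.F (2 * q + 1) / 2 - b q) :=
            mul_nonneg s2nn (by linarith [hqU])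
          nlinarith [hchain, hqQ, h2]
        · rw [e0, eidx]
          linarith [hqU, hFFle]
      · -- n = 3q + 1, q ≥ 1
        have hq1 : 1 ≤ q := by omega
        obtain ⟨hq0, hqQ, hqU⟩ := IH q (by omega)
        obtain ⟨hq10, -, -⟩ := IH (q + 1) (by omega)
        have e1 := hrec1 q
        have e2 := hrec2 q
        have hscale : NorthshieldAux.F (3 * (2 * q + 1))
            = (Real.sqrt 2 + 1) * NorthshieldAux.F (2 * q + 1) :=
          NorthshieldAux.F_scale (2 * q + 1) (by omega)
        have eidx : 2 * (3 * q + 1) + 1 = 3 * (2 * q + 1) := by ring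
        have eidx2 : 3 * q + 1 + 1 = 3 * q + 2 := by ring
        refine ⟨?_, ?_, ?_⟩
        · rw [e1]
          have := mul_nonneg s2nn hq0
          linarith
        · rw [eidx2, e1, e2, eidx, hscale]
          have h2 := mul_le_mul_of_nonneg_left hqQ
            (by linarith : (0:ℝ) ≤ Real.sqrt 2 + 1)
          nlinarith [h2]
        · rw [e1, eidx, hscale]
          have h2 : 0 ≤ (Real.sqrt 2 - 1) * (NorthshieldAux.F (2 * q + 1) / 2 - b q) :=
            mul_nonneg (by linarith) (by linarith [hqU])
          nlinarith [h2, hqQ]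
      · -- n = 3q + 2, q ≥ 0
        obtain ⟨hq0, hqQ, hqU⟩ := IH q (by omega)
        obtain ⟨hq10, -, hq1U⟩ := IH (q + 1) (by omega)
        have e2 := hrec2 q
        have e0 : b (3 * q + 2 + 1) = b (q + 1) := by
          rw [show 3 * q + 2 + 1 = 3 * (q + 1) from by ring, hrec0]
        set k := Nat.log 3 (2 * q + 1) with hk
        have h3k : 3 ^ k ≤ 2 * q + 1 := Nat.pow_log_le_self 3 (by omega)
        have h3k2 : 2 * q + 1 < 3 ^ (k + 1) := Nat.lt_pow_succ_log_self (by norm_num) _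
        have hodd : 3 ^ (k + 1) % 2 = 1 := Nat.odd_iff.mp (Odd.pow (by decide))
        have h23 : 2 * q + 3 ≤ 3 ^ (k + 1) := by omega
        have h65 : 6 * q + 5 ≤ 3 ^ (k + 1 + 1) := by
          have : 3 ^ (k + 1 + 1) = 3 * 3 ^ (k + 1) := by ring
          omega
        have h65' : 3 ^ (k + 1) ≤ 6 * q + 5 := by omega
        have hf1 := NorthshieldAux.F_formula k (2 * q + 1) h3k (by omega)
        have hf3 := NorthshieldAux.F_formula k (2 * q + 3) (by omega) h23
        have hf65 := NorthshieldAux.F_formula (k + 1) (6 * q + 5) h65' h65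
        have hP' := NorthshieldAux.pow_div_pos k
        -- identities
        have hF23 : NorthshieldAux.F (2 * q + 3) = NorthshieldAux.F (2 * q + 1)
            + Real.sqrt 2 * ((Real.sqrt 2 + 1) / 3) ^ k := by
          rw [hf1, hf3]; push_cast; ring
        have hF65 : NorthshieldAux.F (6 * q + 5) = (Real.sqrt 2 + 1) * NorthshieldAux.F (2 * q + 1)
            + Real.sqrt 2 * (Real.sqrt 2 + 1) / 3 * ((Real.sqrt 2 + 1) / 3) ^ k := by
          rw [hf1, hf65]
          push_cast
          rw [pow_succ, pow_succ]
          ring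
        have eidx : 2 * (3 * q + 2) + 1 = 6 * q + 5 := by ring
        have eq23 : 2 * (q + 1) + 1 = 2 * q + 3 := by ring
        rw [eq23] at hq1U
        rw [hF23] at hq1U
        refine ⟨?_, ?_, ?_⟩
        · rw [e2]
          have := mul_nonneg s2nn hq10
          linarith
        · rw [e2, e0, eidx, hF65]
          have h2 : 0 ≤ Real.sqrt 2 * (NorthshieldAux.F (2 * q + 1) - b (q + 1)) :=
            mul_nonneg s2nn (by linarith [hqQ, hq0])
          have h3 : 0 ≤ Real.sqrt 2 * (Real.sqrt 2 + 1) / 3 * ((Real.sqrt 2 + 1) / 3) ^ k := by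
            positivity
          nlinarith [h2, h3, hqQ]
        · rw [e2, eidx, hF65]
          have h2 : 0 ≤ (Real.sqrt 2 - 1) * ((NorthshieldAux.F (2 * q + 1)
              + Real.sqrt 2 * ((Real.sqrt 2 + 1) / 3) ^ k) / 2 - b (q + 1)) :=
            mul_nonneg (by linarith) (by linarith [hq1U])
          nlinarith [h2, hqQ, hP', s2, mul_pos (by linarith : (0:ℝ) < Real.sqrt 2) hP']
  -- floor of logb equals Nat.log
  have hfloor : ∀ j : ℕ, ⌊Real.logb 3 (j : ℝ)⌋ = (Nat.log 3 j : ℤ) := by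
    intro j
    rw [show ((3:ℝ)) = ((3:ℕ):ℝ) by norm_num, Real.floor_logb_natCast (Nat.cast_nonneg j),
      Int.log_natCast]
  intro m hm
  rcases eq_or_lt_of_le hm with rfl | hm3
  · -- m = 2
    have hb2 : b 2 = Real.sqrt 2 := by
      have h2 := hrec2 0
      norm_num [hb0, hb1] at h2
      exact h2
    have hlog2 : Nat.log 3 2 = 0 := Nat.log_eq_of_pow_le_of_lt_pow (by norm_num) (by norm_num)
    have hfl := hfloor 2
    rw [hlog2] at hfl
    rw [hfl]
    have hcond : ¬ ((2:ℕ):ℝ) ≤ 3 / 2 := by push_cast; norm_num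
    have hlogn4 : Nat.log 3 4 = 1 :=
      Nat.log_eq_of_pow_le_of_lt_pow (by norm_num) (by norm_num)
    have hlog4 : ⌊Real.logb 3 (2 * ((2:ℕ):ℝ))⌋ = 1 := by
      rw [show (2 * ((2:ℕ):ℝ)) = ((4:ℕ):ℝ) by push_cast; norm_num,
        show ((3:ℝ)) = ((3:ℕ):ℝ) by norm_num,
        Real.floor_logb_natCast (Nat.cast_nonneg 4), Int.log_natCast, hlogn4]
      norm_num
    rw [h, if_neg hcond, hlog4, hb2]
    push_cast
    nlinarith [s2, s2lt, s2gt]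
  · -- m ≥ 3
    have hm3' : 3 ≤ m := hm3
    obtain ⟨-, -, hUm⟩ := key m
    set K := Nat.log 3 (2 * m) with hK
    have h3K : 3 ^ K ≤ 2 * m := Nat.pow_log_le_self 3 (by omega)
    have h3K2 : 2 * m < 3 ^ (K + 1) := Nat.lt_pow_succ_log_self (by norm_num) _
    have hodd : 3 ^ (K + 1) % 2 = 1 := Nat.odd_iff.mp (Odd.pow (by decide))
    have h2m1 : 2 * m + 1 ≤ 3 ^ (K + 1) := by omega
    have hfF := NorthshieldAux.F_formula K (2 * m + 1) (by omega) h2m1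
    have hcond : ¬ ((m:ℕ):ℝ) ≤ 3 / 2 := by
      push_cast
      have : (3:ℝ) ≤ (m:ℝ) := by exact_mod_cast hm3'
      linarith
    have hlogn : (⌊Real.logb 3 (2 * ((m:ℕ):ℝ))⌋).toNat = K := by
      rw [show (2 * ((m:ℕ):ℝ)) = ((2*m:ℕ):ℝ) by push_cast; ring,
        show ((3:ℝ)) = ((3:ℕ):ℝ) by norm_num,
        Real.floor_logb_natCast (Nat.cast_nonneg _), Int.log_natCast, hK]
      simp
    have hhm : h (m:ℝ) = Real.sqrt 2 / 2 * ((Real.sqrt 2 + 1) / 3) ^ K * (m:ℝ)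
        + (Real.sqrt 2 + 1) ^ K * (2 - Real.sqrt 2) / 4 := by
      rw [h, if_neg hcond, hlogn]
    have hFh : NorthshieldAux.F (2 * m + 1) / 2
        = h (m:ℝ) + Real.sqrt 2 / 4 * ((Real.sqrt 2 + 1) / 3) ^ K := by
      rw [hfF, hhm]; push_cast; ring
    have hPle1 : ((Real.sqrt 2 + 1) / 3) ^ K ≤ 1 := by
      apply pow_le_one₀ (by positivity) (by rw [div_le_one (by norm_num)]; linarith)
    have hlogm1 : 1 ≤ Nat.log 3 m :=
      (Nat.le_log_iff_pow_le (by norm_num) (by omega)).mpr (by omega)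
    have hflm := hfloor m
    rw [hflm]
    have hcastlog : (1:ℝ) ≤ ((Nat.log 3 m : ℤ) : ℝ) := by exact_mod_cast hlogm1
    have hstep : b m ≤ h (m:ℝ) + Real.sqrt 2 / 4 * ((Real.sqrt 2 + 1) / 3) ^ K := by
      rw [← hFh]; exact hUm
    have hpos : 0 ≤ ((Real.sqrt 2 + 1) / 3) ^ K := by positivity
    nlinarith [hstep, hPle1, hcastlog, s2gt, hpos]
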